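/- There exist regular languages L₁ and L₂ (over the alphabet Σ = {a, b, $, %}) such that L₁ ←min-sdi L₂ is not regular. -/

import Mathlib

/-- Site-directed insertion (SDI) of string `y` into string `x`. -/
def sdiStr {α : Type} (x y : List α) : Set (List α) :=
  { w | ∃ x₁ u z v x₂ : List α,
      x = x₁ ++ u ++ v ++ x₂ ∧ y = u ++ z ++ v ∧ u ≠ [] ∧ v ≠ [] ∧
      w = x₁ ++ u ++ z ++ v ++ x₂ }

/-- Site-directed insertion extended to languages. -/
def sdiLang {α : Type} (L₁ L₂ : Set (List α)) : Set (List α) :=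
  { w | ∃ x ∈ L₁, ∃ y ∈ L₂, w ∈ sdiStr x y }

/-- Alphabetic site-directed insertion of string `y` into string `x`. -/
def asdiStr {α : Type} (x y : List α) : Set (List α) :=
  { w | ∃ (x₁ x₂ z : List α) (a b : α),
      x = x₁ ++ [a] ++ [b] ++ x₂ ∧ y = [a] ++ z ++ [b] ∧
      w = x₁ ++ [a] ++ z ++ [b] ++ x₂ }

/-- Alphabetic site-directed insertion extended to languages. -/
def asdiLang {α : Type} (L₁ L₂ : Set (List α)) : Set (List α) :=
  { w | ∃ x ∈ L₁, ∃ y ∈ L₂, w ∈ asdiStr x y }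

/-- Maximal site-directed insertion of string `y` into string `x`. -/
def maxSdiStr {α : Type} (x y : List α) : Set (List α) :=
  { w | ∃ x₁ u z v x₂ : List α,
      x = x₁ ++ u ++ v ++ x₂ ∧ y = u ++ z ++ v ∧ u ≠ [] ∧ v ≠ [] ∧
      w = x₁ ++ u ++ z ++ v ++ x₂ ∧
      ¬ ∃ x₁' x₂' z' : List α, x₁' <:+ x₁ ∧ x₂' <+: x₂ ∧
          x₁' ++ x₂' ≠ [] ∧ y = x₁' ++ u ++ z' ++ v ++ x₂' }

/-- Maximal site-directed insertion extended to languages. -/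
def maxSdiLang {α : Type} (L₁ L₂ : Set (List α)) : Set (List α) :=
  { w | ∃ x ∈ L₁, ∃ y ∈ L₂, w ∈ maxSdiStr x y }

/-- Minimal site-directed insertion of string `y` into string `x`:
the words `u` and `v` of the matched outfix must be unbordered. -/
def minSdiStr {α : Type} (x y : List α) : Set (List α) :=
  { w | ∃ x₁ u z v x₂ : List α,
      x = x₁ ++ u ++ v ++ x₂ ∧ y = u ++ z ++ v ∧ u ≠ [] ∧ v ≠ [] ∧
      w = x₁ ++ u ++ z ++ v ++ x₂ ∧
      (∀ s : List α, s <:+ u → s ≠ [] → s ≠ u → ¬ s <+: u) ∧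
      (∀ p : List α, p <+: v → p ≠ [] → p ≠ v → ¬ p <:+ v) }

/-- Minimal site-directed insertion extended to languages. -/
def minSdiLang {α : Type} (L₁ L₂ : Set (List α)) : Set (List α) :=
  { w | ∃ x ∈ L₁, ∃ y ∈ L₂, w ∈ minSdiStr x y }

/-- The four-letter alphabet Σ = {a, b, $, %}. -/
inductive Sym4 : Type
  | a : Sym4
  | b : Sym4
  | dollar : Sym4
  | percent : Sym4
  deriving DecidableEq

instance : Fintype Sym4 where
  elems := {Sym4.a, Sym4.b, Sym4.dollar, Sym4.percent}
  complete := fun x => by cases x <;> simp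


namespace MSDI
open List

def rep (n : ℕ) : List Sym4 := List.replicate n Sym4.a

def gad (i j : ℕ) : List Sym4 := Sym4.b :: (rep i ++ Sym4.b :: (rep j ++ [Sym4.b]))

@[simp] lemma rep_length (n : ℕ) : (rep n).length = n := List.length_replicate

@[simp] lemma rep_append (m n : ℕ) : rep m ++ rep n = rep (m + n) :=
  (List.replicate_add m n _).symm

@[simp] lemma gad_length (i j : ℕ) : (gad i j).length = i + j + 3 := by
  simp [gad]; omega

@[simp] lemma count_rep (n : ℕ) : (rep n).count Sym4.b = 0 := by
  simp [rep, List.count_replicate]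

@[simp] lemma count_gad (i j : ℕ) : (gad i j).count Sym4.b = 3 := by
  simp [gad]

@[simp] lemma reverse_rep (n : ℕ) : (rep n).reverse = rep n := List.reverse_replicate

lemma reverse_gad (i j : ℕ) : (gad i j).reverse = gad j i := by
  simp [gad]

lemma take_gad_lo {i j l : ℕ} (h1 : 1 ≤ l) (h2 : l ≤ i + 1) :
    (gad i j).take l = Sym4.b :: rep (l - 1) := by
  obtain ⟨k, rfl⟩ : ∃ k, l = k + 1 := ⟨l - 1, by omega⟩
  have hk : k ≤ i := by omega
  rw [gad, List.take_succ_cons, List.take_append_of_le_length (by simp; omega)]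
  simp [rep, List.take_replicate, min_eq_left hk]

lemma take_gad_mid {i j t : ℕ} (ht : t ≤ j) :
    (gad i j).take (i + 2 + t) = Sym4.b :: (rep i ++ Sym4.b :: rep t) := by
  rw [gad, show i + 2 + t = (i + 1 + t) + 1 by omega, List.take_succ_cons,
    List.take_append, List.take_of_length_le (by simp; omega)]
  simp only [rep_length, show i + 1 + t - i = t + 1 by omega, List.take_succ_cons]
  rw [List.take_append_of_le_length (by simp [ht])]
  simp [rep, List.take_replicate, min_eq_left ht]

lemma repB_inj : ∀ {i i' : ℕ} {r r' : List Sym4},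
    rep i ++ Sym4.b :: r = rep i' ++ Sym4.b :: r' → i = i' ∧ r = r' := by
  intro i
  induction i with
  | zero =>
    intro i' r r' h
    cases i' with
    | zero => simpa [rep] using h
    | succ m => rw [rep, rep, List.replicate_succ] at h; simp at h
  | succ n ih =>
    intro i' r r' h
    cases i' with
    | zero => rw [rep, rep, List.replicate_succ] at h; simp at h
    | succ m =>
      rw [rep, rep, List.replicate_succ, List.replicate_succ] at h
      simp only [List.cons_append, List.cons.injEq, true_and] at h
      obtain ⟨h1, h2⟩ := ih h
      exact ⟨by omega, h2⟩

lemma gad_inj {i j i' j' : ℕ} (h : gad i j = gad i' j') : i = i' ∧ j = j' := by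
  rw [gad, gad] at h
  simp only [List.cons.injEq, true_and] at h
  obtain ⟨h1, h2⟩ := repB_inj h
  have : rep j ++ Sym4.b :: ([] : List Sym4) = rep j' ++ Sym4.b :: ([] : List Sym4) := by
    simpa using h2
  obtain ⟨h3, _⟩ := repB_inj this
  exact ⟨h1, h3⟩

lemma prefix_gad {i j : ℕ} {u : List Sym4} (hp : u <+: gad i j) (hne : u ≠ []) :
    (∃ k, k ≤ i ∧ u = Sym4.b :: rep k) ∨
    (∃ t, t ≤ j ∧ u = Sym4.b :: (rep i ++ Sym4.b :: rep t)) ∨ u = gad i j := by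
  have hl : u.length ≤ i + j + 3 := by
    have := hp.length_le; rwa [gad_length] at this
  have h1 : 1 ≤ u.length := List.length_pos_iff.mpr hne
  have hu : u = (gad i j).take u.length := List.prefix_iff_eq_take.mp hp
  rcases lt_or_ge u.length (i + 2) with h | h
  · left
    refine ⟨u.length - 1, by omega, ?_⟩
    conv_lhs => rw [hu]
    rw [take_gad_lo h1 (by omega)]
  · rcases lt_or_ge u.length (i + j + 3) with h2 | h2
    · right; left
      refine ⟨u.length - (i + 2), by omega, ?_⟩
      conv_lhs => rw [hu, show u.length = i + 2 + (u.length - (i + 2)) by omega]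
      rw [take_gad_mid (by omega)]
    · right; right
      rw [hu, List.take_of_length_le (by rw [gad_length]; omega)]

lemma rep_prefix_of_le {m n : ℕ} (h : m ≤ n) (r : List Sym4) : rep m <+: rep n ++ r := by
  refine ⟨rep (n - m) ++ r, ?_⟩
  rw [← List.append_assoc, rep_append, show m + (n - m) = n by omega]

lemma prefix_unbordered {i j : ℕ} {u : List Sym4} (hp : u <+: gad i j) (hne : u ≠ [])
    (hub : ∀ s : List Sym4, s <:+ u → s ≠ [] → s ≠ u → ¬ s <+: u) :
    (∃ k, k ≤ i ∧ u = Sym4.b :: rep k) ∨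
    (∃ t, i < t ∧ t ≤ j ∧ u = Sym4.b :: (rep i ++ Sym4.b :: rep t)) := by
  rcases prefix_gad hp hne with h | ⟨t, ht, rfl⟩ | rfl
  · left; exact h
  · right
    refine ⟨t, ?_, ht, rfl⟩
    by_contra hti
    push_neg at hti
    refine hub (Sym4.b :: rep t) ⟨Sym4.b :: rep i, by simp⟩ (by simp) ?_ ?_
    · intro h
      have := congrArg List.length h
      simp at this
      omega
    · rw [List.cons_prefix_cons]
      exact ⟨rfl, rep_prefix_of_le hti _⟩
  · exfalso
    refine hub [Sym4.b] ⟨Sym4.b :: (rep i ++ Sym4.b :: rep j), by simp [gad]⟩ (by simp) ?_ ?_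
    · intro h
      have := congrArg List.length h
      rw [gad_length] at this
      simp at this
    · exact ⟨rep i ++ Sym4.b :: (rep j ++ [Sym4.b]), rfl⟩

lemma suffix_unbordered {i j : ℕ} {v : List Sym4} (hs : v <:+ gad i j) (hne : v ≠ [])
    (hvb : ∀ p : List Sym4, p <+: v → p ≠ [] → p ≠ v → ¬ p <:+ v) :
    (∃ t, t ≤ j ∧ v = rep t ++ [Sym4.b]) ∨
    (∃ s, j < s ∧ s ≤ i ∧ v = rep s ++ (Sym4.b :: (rep j ++ [Sym4.b]))) := by
  have hp : v.reverse <+: gad j i := by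
    rw [← reverse_gad]
    exact List.reverse_prefix.mpr hs
  have hub : ∀ s : List Sym4, s <:+ v.reverse → s ≠ [] → s ≠ v.reverse → ¬ s <+: v.reverse := by
    intro s hsuf h1 h2 hpre
    have hsv : s.reverse <+: v := List.reverse_suffix.mp (by simpa using hsuf)
    refine hvb s.reverse hsv (by simpa using h1) ?_ ?_
    · intro h; exact h2 (by rw [← h]; simp)
    · exact List.reverse_prefix.mp (by simpa using hpre)
  rcases prefix_unbordered hp (by simpa using hne) hub with ⟨k, hk, h⟩ | ⟨t, h1, h2, h⟩
  · left
    refine ⟨k, hk, ?_⟩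
    have := congrArg List.reverse h
    simpa using this
  · right
    refine ⟨t, h1, h2, ?_⟩
    have := congrArg List.reverse h
    simp at this
    simpa [List.append_assoc] using this

def Lrg : Language Sym4 := { w | ∃ i j, w = gad i j }

lemma mem_starts_b {w : List Sym4} (hw : w ∈ minSdiLang Lrg Lrg) :
    ∃ t, w = Sym4.b :: t := by
  obtain ⟨x, ⟨n, p, rfl⟩, y, ⟨i, j, rfl⟩, x₁, u, z, v, x₂, hx, hy, hu, hv, hw, -, -⟩ := hw
  cases x₁ with
  | nil =>
    cases u with
    | nil => exact absurd rfl hu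
    | cons c t =>
      have : c = Sym4.b := by
        rw [gad] at hy
        simp only [List.cons_append, List.cons.injEq] at hy
        exact hy.1.symm
      exact ⟨t ++ (z ++ (v ++ x₂)), by simp [hw, this]⟩
  | cons c t =>
    have : c = Sym4.b := by
      rw [gad] at hx
      simp only [List.cons_append, List.cons.injEq] at hx
      exact hx.1.symm
    exact ⟨t ++ (u ++ (z ++ (v ++ x₂))), by simp [hw, this]⟩

lemma not_mem_eq (m : ℕ) : gad m m ∉ minSdiLang Lrg Lrg := by
  rintro ⟨x, ⟨n, p, rfl⟩, y, ⟨i, j, rfl⟩, x₁, u, z, v, x₂, hx, hy, hu, hv, hw, hub, hvb⟩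
  -- count bookkeeping
  have cy : u.count Sym4.b + (z.count Sym4.b + v.count Sym4.b) = 3 := by
    have := congrArg (List.count Sym4.b) hy
    simpa [List.count_append] using this.symm
  have cw : x₁.count Sym4.b + (u.count Sym4.b + (z.count Sym4.b + (v.count Sym4.b
      + x₂.count Sym4.b))) = 3 := by
    have := congrArg (List.count Sym4.b) hw
    simpa [List.count_append] using this.symm
  have cx1 : x₁.count Sym4.b = 0 := by omega
  have cx2 : x₂.count Sym4.b = 0 := by omega
  -- x₁ = []
  have hx1 : x₁ = [] := by
    cases x₁ with
    | nil => rfl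
    | cons c t =>
      have hc : c = Sym4.b := by
        rw [gad] at hx
        simp only [List.cons_append, List.cons.injEq] at hx
        exact hx.1.symm
      rw [hc] at cx1
      simp [List.count_cons] at cx1
  subst hx1
  -- x₂ = []
  have hx2 : x₂ = [] := by
    rcases x₂.eq_nil_or_concat with h | ⟨l, e, rfl⟩
    · exact h
    · exfalso
      have h1 : (gad n p).getLast? = some Sym4.b := by
        rw [show gad n p = (Sym4.b :: (rep n ++ Sym4.b :: rep p)) ++ [Sym4.b] by simp [gad]]
        exact List.getLast?_concat
      have h2 : (gad n p).getLast? = some e := by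
        rw [hx, show ([] ++ u ++ v ++ l.concat e : List Sym4) = ([] ++ u ++ v ++ l) ++ [e] by
          simp]
        exact List.getLast?_concat
      rw [h1] at h2
      have he : e = Sym4.b := by injection h2 with h3; exact h3.symm
      rw [he] at cx2
      simp [List.count_append, List.count_cons] at cx2
  subst hx2
  -- w = y
  have hwy : gad m m = gad i j := by
    rw [hw, hy]; simp
  obtain ⟨him, hjm⟩ := gad_inj hwy
  -- classify u and v
  have hupre : u <+: gad i j := ⟨z ++ v, by simp [hy]⟩
  have hvsuf : v <:+ gad i j := ⟨u ++ z, by simp [hy]⟩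
  have hxuv : gad n p = u ++ v := by simpa using hx
  have cx : u.count Sym4.b + v.count Sym4.b = 3 := by
    have := congrArg (List.count Sym4.b) hxuv
    simpa [List.count_append] using this.symm
  rcases prefix_unbordered hupre hu hub with ⟨k, hk, rfl⟩ | ⟨t, ht1, ht2, rfl⟩ <;>
    rcases suffix_unbordered hvsuf hv hvb with ⟨t', ht', rfl⟩ | ⟨s, hs1, hs2, rfl⟩
  · -- counts 1 + 1 ≠ 3
    simp [List.count_cons, List.count_append] at cx
  · omega
  · omega
  · simp [List.count_cons, List.count_append] at cx

/-- a prefix of `rep P ++ b :: r` with no `b` is a short replicate. -/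
lemma prefix_repb : ∀ {s : List Sym4} {P : ℕ} {r : List Sym4},
    s <+: rep P ++ Sym4.b :: r → s.count Sym4.b = 0 →
    s = rep s.length ∧ s.length ≤ P := by
  intro s
  induction s with
  | nil => intro P r _ _; simp [rep]
  | cons c t ih =>
    intro P r h hc
    cases P with
    | zero =>
      exfalso
      rw [rep] at h
      simp only [List.replicate_zero, List.nil_append, List.cons_prefix_cons] at h
      rw [h.1] at hc
      simp [List.count_cons] at hc
    | succ n =>
      rw [rep, List.replicate_succ] at h
      simp only [List.cons_append, List.cons_prefix_cons] at h
      obtain ⟨rfl, h2⟩ := h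
      have hc' : t.count Sym4.b = 0 := by simpa [List.count_cons] using hc
      obtain ⟨h3, h4⟩ := ih (show t <+: rep n ++ Sym4.b :: r from h2) hc'
      constructor
      · conv_lhs => rw [h3]
        simp [rep, List.replicate_succ]
      · simp; omega

lemma suffix_of_suffix_length_le {s c d : List Sym4} (h : s <:+ c ++ d)
    (hl : s.length ≤ d.length) : s <:+ d := by
  have h1 : s.reverse <+: d.reverse ++ c.reverse := by
    have := List.reverse_prefix.mpr h
    simpa using this
  have h2 : s.reverse = (d.reverse ++ c.reverse).take s.reverse.length :=
    List.prefix_iff_eq_take.mp h1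
  rw [List.take_append_of_le_length (by simpa using hl)] at h2
  have h3 : s.reverse <+: d.reverse := by
    rw [h2]; exact List.take_prefix _ _
  exact List.reverse_prefix.mp h3

lemma unbordered_two_block {P T : ℕ} (hPT : P < T) :
    ∀ s : List Sym4, s <:+ Sym4.b :: (rep P ++ Sym4.b :: rep T) → s ≠ [] →
      s ≠ Sym4.b :: (rep P ++ Sym4.b :: rep T) →
      ¬ s <+: Sym4.b :: (rep P ++ Sym4.b :: rep T) := by
  intro s hsuf hne hneu hpre
  set u : List Sym4 := Sym4.b :: (rep P ++ Sym4.b :: rep T) with hudef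
  -- s starts with b
  obtain ⟨c, t, rfl⟩ : ∃ c t, s = c :: t := by
    cases s with
    | nil => exact absurd rfl hne
    | cons c t => exact ⟨c, t, rfl⟩
  have hcb : c = Sym4.b := by
    rw [hudef, List.cons_prefix_cons] at hpre
    exact hpre.1
  subst hcb
  -- the complement prefix is nonempty and starts with b
  obtain ⟨pre, hpres⟩ := hsuf
  have hpne : pre ≠ [] := by
    rintro rfl
    exact hneu (by simpa using hpres)
  -- count bookkeeping : count u = 2
  have cu : (Sym4.b :: t).count Sym4.b + pre.count Sym4.b = 2 := by
    have := congrArg (List.count Sym4.b) hpres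
    simp only [List.count_append] at this
    rw [hudef] at this
    simp [List.count_cons] at this ⊢
    omega
  have hppre : pre <+: u := ⟨Sym4.b :: t, hpres⟩
  obtain ⟨c', t', rfl⟩ : ∃ c' t', pre = c' :: t' := by
    cases pre with
    | nil => exact absurd rfl hpne
    | cons c' t' => exact ⟨c', t', rfl⟩
  have hcb' : c' = Sym4.b := by
    rw [hudef, List.cons_prefix_cons] at hppre
    exact hppre.1
  subst hcb'
  -- so count of s is exactly 1
  have hcount : t.count Sym4.b = 0 := by
    simp [List.count_cons] at cu
    omega
  -- hence s = b :: rep k with k ≤ P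
  have hts : t <+: rep P ++ Sym4.b :: rep T := by
    rw [hudef, List.cons_prefix_cons] at hpre
    exact hpre.2
  obtain ⟨hrep, hlen⟩ := prefix_repb hts hcount
  -- but s is a suffix of u whose tail part is rep T, so s ⊆ rep T : contradiction
  have hueq : u = (Sym4.b :: (rep P ++ [Sym4.b])) ++ rep T := by simp [hudef]
  have hsT : (Sym4.b :: t) <:+ rep T := by
    have h5 : (Sym4.b :: t) <:+ (Sym4.b :: (rep P ++ [Sym4.b])) ++ rep T :=
      hueq ▸ ⟨Sym4.b :: t', hpres⟩
    exact suffix_of_suffix_length_le h5 (by simp; omega)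
  have hmem : Sym4.b ∈ rep T := hsT.subset (by simp)
  rw [rep] at hmem
  exact Sym4.noConfusion (List.eq_of_mem_replicate hmem)

lemma mem_lt {P Q : ℕ} (h : P < Q) : gad P Q ∈ minSdiLang Lrg Lrg := by
  refine ⟨gad P (P + 1), ⟨P, P + 1, rfl⟩, gad P Q, ⟨P, Q, rfl⟩,
    [], Sym4.b :: (rep P ++ Sym4.b :: rep (P + 1)), rep (Q - (P + 1)), [Sym4.b], [],
    ?_, ?_, by simp, by simp, ?_, ?_, ?_⟩
  · simp [gad]
  · have hQ : rep (P + 1) ++ rep (Q - (P + 1)) = rep Q := by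
      rw [rep_append]; congr 1; omega
    simp [gad, ← hQ]
  · have hQ : rep (P + 1) ++ rep (Q - (P + 1)) = rep Q := by
      rw [rep_append]; congr 1; omega
    simp [gad, ← hQ]
  · exact unbordered_two_block (by omega)
  · intro p hp h1 h2
    have : p.length ≤ 1 := by simpa using hp.length_le
    have h1' : 1 ≤ p.length := List.length_pos_iff.mpr h1
    have : p = [Sym4.b] := by
      have := List.prefix_iff_eq_take.mp hp
      rw [show p.length = 1 by omega] at this
      simpa using this
    exact absurd this h2

inductive St : Type
  | s0 | s1 | s2 | s3 | dead
  deriving DecidableEq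

instance : Fintype St where
  elems := {St.s0, St.s1, St.s2, St.s3, St.dead}
  complete := fun x => by cases x <;> simp

def tr : St → Sym4 → St
  | .s0, .b => .s1
  | .s1, .a => .s1
  | .s1, .b => .s2
  | .s2, .a => .s2
  | .s2, .b => .s3
  | _, _ => .dead

def M : DFA Sym4 St := ⟨tr, .s0, {.s3}⟩

lemma evalFrom_cons (s : St) (c : Sym4) (t : List Sym4) :
    M.evalFrom s (c :: t) = M.evalFrom (tr s c) t := rfl

lemma evalFrom_rep {s : St} (h : tr s Sym4.a = s) (n : ℕ) : M.evalFrom s (rep n) = s := by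
  induction n with
  | zero => rfl
  | succ k ih =>
    rw [rep, List.replicate_succ, ← rep, evalFrom_cons, h, ih]

lemma eval_gad (i j : ℕ) : M.eval (gad i j) = St.s3 := by
  show M.evalFrom St.s0 _ = St.s3
  rw [gad, evalFrom_cons, show tr St.s0 Sym4.b = St.s1 from rfl,
    DFA.evalFrom_of_append, evalFrom_rep rfl, evalFrom_cons,
    show tr St.s1 Sym4.b = St.s2 from rfl, DFA.evalFrom_of_append,
    evalFrom_rep rfl]
  rfl

lemma eval_char (w : List Sym4) :
    (M.eval w = St.s0 → w = []) ∧
    (M.eval w = St.s1 → ∃ n, w = Sym4.b :: rep n) ∧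
    (M.eval w = St.s2 → ∃ n p, w = Sym4.b :: (rep n ++ Sym4.b :: rep p)) ∧
    (M.eval w = St.s3 → ∃ n p, w = gad n p) := by
  induction w using List.reverseRecOn with
  | nil =>
    refine ⟨fun _ => rfl, ?_, ?_, ?_⟩ <;> intro h <;> exact absurd h (by decide)
  | append_singleton w c ih =>
    obtain ⟨ih0, ih1, ih2, ih3⟩ := ih
    have hev : M.eval (w ++ [c]) = tr (M.eval w) c := DFA.eval_append_singleton M w c
    refine ⟨?_, ?_, ?_, ?_⟩ <;> intro h <;> rw [hev] at h <;>
      rcases hq : M.eval w with - | - | - | - | - <;> rw [hq] at h <;>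
      rcases c with - | - | - | - <;> simp only [tr] at h <;> try exact absurd h (by decide)
    · -- tr s0 b = s1 : target ∃ n, w ++ [b] = b :: rep n
      rw [ih0 hq]
      exact ⟨0, rfl⟩
    · -- tr s1 a = s1
      obtain ⟨n, rfl⟩ := ih1 hq
      refine ⟨n + 1, ?_⟩
      simp [rep, List.replicate_succ']
    · -- tr s1 b = s2
      obtain ⟨n, rfl⟩ := ih1 hq
      refine ⟨n, 0, ?_⟩
      simp [rep]
    · -- tr s2 a = s2
      obtain ⟨n, p, rfl⟩ := ih2 hq
      refine ⟨n, p + 1, ?_⟩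
      simp [rep, List.replicate_succ']
    · -- tr s2 b = s3
      obtain ⟨n, p, rfl⟩ := ih2 hq
      refine ⟨n, p, ?_⟩
      simp [gad]

lemma acc : M.accepts = Lrg := by
  ext w
  rw [DFA.mem_accepts]
  constructor
  · intro h
    have h3 : M.eval w = St.s3 := h
    exact (eval_char w).2.2.2 h3
  · rintro ⟨i, j, rfl⟩
    show M.eval _ ∈ _
    rw [eval_gad]
    exact rfl

lemma Lrg_regular : Lrg.IsRegular := ⟨St, inferInstance, M, acc⟩

lemma rep_append' (m n : ℕ) (l : List Sym4) : rep m ++ (rep n ++ l) = rep (m + n) ++ l := by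
  rw [← List.append_assoc, rep_append]

lemma flatten_rep (k q : ℕ) : (List.replicate k (rep q)).flatten = rep (k * q) := by
  induction k with
  | zero => simp [rep]
  | succ n ih =>
    rw [List.replicate_succ, List.flatten_cons, ih, rep_append]
    congr 1
    ring

theorem main_not_regular : ¬ Language.IsRegular (minSdiLang Lrg Lrg) := by
  rintro ⟨σ, hfin, N, hN⟩
  haveI := hfin
  set P := Fintype.card σ with hPdef
  have hP1 : 1 ≤ P := Fintype.card_pos_iff.mpr ⟨N.start⟩
  set Q := P + P.factorial with hQdef
  have hPQ : P < Q := by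
    have := P.factorial_pos
    omega
  have hw : gad P Q ∈ N.accepts := by
    rw [hN]; exact mem_lt hPQ
  obtain ⟨α, β, γ, hsplit, hlen, hβ, hpump⟩ :=
    N.pumping_lemma hw (by rw [gad_length]; omega)
  have hin : ∀ k, α ++ (List.replicate k β).flatten ++ γ ∈ minSdiLang Lrg Lrg := by
    intro k
    rw [← hN]
    apply hpump
    refine Language.mem_mul.mpr ⟨α ++ (List.replicate k β).flatten,
      Language.mem_mul.mpr ⟨α, rfl, (List.replicate k β).flatten, ?_, rfl⟩, γ, rfl, rfl⟩
    exact Language.mem_kstar.mpr ⟨List.replicate k β, rfl,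
      fun y hy => Set.mem_singleton_iff.mpr (List.eq_of_mem_replicate hy)⟩
  have hβ1 : 1 ≤ β.length := List.length_pos_iff.mpr hβ
  rcases List.eq_nil_or_concat α with rfl | hαne
  · -- α = [] : drop β, the result does not start with b anymore
    have hβpre : β <+: gad P Q := ⟨γ, by rw [hsplit]; simp⟩
    have hβeq : β = Sym4.b :: rep (β.length - 1) := by
      have := List.prefix_iff_eq_take.mp hβpre
      rw [take_gad_lo hβ1 (by simp at hlen; omega)] at this
      exact this
    obtain ⟨t, ht⟩ := mem_starts_b (by simpa using hin 0)
    -- γ = b :: t  and  gad P Q = β ++ γ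
    have : rep (β.length - 1) ++ Sym4.b :: t = rep P ++ Sym4.b :: (rep Q ++ [Sym4.b]) := by
      have h2 := hsplit
      rw [hβeq, ht] at h2
      rw [gad] at h2
      simpa using h2.symm
    have := (repB_inj this).1
    simp at hlen
    omega
  · obtain ⟨α', e, rfl⟩ := hαne
    simp only [List.concat_eq_append] at hsplit hin hlen
    have hα1 : 1 ≤ (α' ++ [e]).length := by simp
    set la := (α' ++ [e]).length with hladef
    set lb := β.length with hlbdef
    have hlab : la + lb ≤ P := hlen
    -- identify α ++ β
    have habpre : (α' ++ [e]) ++ β <+: gad P Q := ⟨γ, by rw [hsplit]⟩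
    have hab : (α' ++ [e]) ++ β = Sym4.b :: rep (la + lb - 1) := by
      have := List.prefix_iff_eq_take.mp habpre
      rw [show ((α' ++ [e]) ++ β).length = la + lb by simp [hladef, hlbdef]; omega,
        take_gad_lo (by omega) (by omega)] at this
      exact this
    have hαpre : (α' ++ [e]) <+: gad P Q := ⟨β ++ γ, by rw [hsplit]; simp⟩
    have hαeq : α' ++ [e] = Sym4.b :: rep (la - 1) := by
      have := List.prefix_iff_eq_take.mp hαpre
      rw [take_gad_lo (by omega) (by omega)] at this
      exact this
    have hβeq : β = rep lb := by
      rw [hαeq] at hab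
      have h2 : rep (la - 1) ++ β = rep (la - 1) ++ rep lb := by
        have h3 : rep (la - 1) ++ β = rep (la + lb - 1) := by
          have := hab
          simp only [List.cons_append, List.cons.injEq] at this
          exact this.2
        rw [h3, rep_append]
        congr 1
        omega
      exact List.append_cancel_left h2
    have hγeq : γ = rep (P - (la - 1) - lb) ++ (Sym4.b :: (rep Q ++ [Sym4.b])) := by
      have h2 := hsplit
      rw [hαeq, hβeq, gad] at h2
      have h3 : rep P ++ (Sym4.b :: (rep Q ++ [Sym4.b])) = rep (la - 1 + lb) ++ γ := by
        simpa using h2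
      rw [show (P : ℕ) = (la - 1 + lb) + (P - (la - 1) - lb) by omega, ← rep_append,
        List.append_assoc] at h3
      exact (List.append_cancel_left h3).symm
    -- pump up to make the two blocks equal
    have hdvd : lb ∣ P.factorial := Nat.dvd_factorial (by omega) (by omega)
    set k := P.factorial / lb + 1 with hkdef
    have hklb : k * lb = P.factorial + lb := by
      rw [hkdef, add_mul, one_mul, Nat.div_mul_cancel hdvd]
    have hbad : (α' ++ [e]) ++ (List.replicate k β).flatten ++ γ = gad Q Q := by
      rw [hαeq, hβeq, hγeq, flatten_rep, gad]
      simp only [List.cons_append, List.append_assoc, rep_append']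
      rw [hklb]
      congr 3
      omega
    have := hin k
    rw [hbad] at this
    exact not_mem_eq Q this

end MSDI

/-- Minimal site-directed insertion does not preserve regularity. -/
theorem minSdi_not_regular :
    ∃ L₁ L₂ : Language Sym4, L₁.IsRegular ∧ L₂.IsRegular ∧
      ¬ Language.IsRegular (minSdiLang L₁ L₂) := by
  exact ⟨MSDI.Lrg, MSDI.Lrg, MSDI.Lrg_regular, MSDI.Lrg_regular, MSDI.main_not_regular⟩
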